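/- Let F : ℝ → ℝ be defined (near 0) by F(t) = (1/2)·1/√((1−t)(1−2t)(2t²+t+1)) − (1/2)·1/(1−t), with √ the real square root. Then for every n ≥ 3, the n-th iterated derivative of F at 0 is strictly positive. (The coefficients of the generating function f(t) = Σ Δ_n (2t)^n are strictly positive for all n ≥ 3; f is 3-samo.) -/

import Mathlib

open Finset
open scoped NNReal ENNReal

set_option maxHeartbeats 1000000

private noncomputable def cb (k : ℕ) : ℝ := (Nat.centralBinom k : ℝ)

private lemma cb_pos (k : ℕ) : 0 < cb k := by
  have := Nat.centralBinom_pos k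
  unfold cb; exact_mod_cast this

private lemma cb_le (k : ℕ) : cb k ≤ 4 ^ k := by
  have h : Nat.centralBinom k ≤ 4 ^ k := by
    calc Nat.centralBinom k = (2 * k).choose k := Nat.centralBinom_eq_two_mul_choose k
    _ ≤ ∑ i ∈ range (2 * k + 1), (2 * k).choose i :=
        Finset.single_le_sum (fun i _ => Nat.zero_le _) (by simp; omega)
    _ = 2 ^ (2 * k) := Nat.sum_range_choose (2 * k)
    _ = 4 ^ k := by rw [pow_mul]; norm_num
  unfold cb
  calc (Nat.centralBinom k : ℝ) ≤ ((4 ^ k : ℕ) : ℝ) := Nat.cast_le.2 h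
  _ = 4 ^ k := by push_cast; ring

private lemma cb_rec (j : ℕ) : ((j:ℝ) + 1) * cb (j + 1) = 2 * (2 * j + 1) * cb j := by
  have := Nat.succ_mul_centralBinom_succ j
  have h : ((j:ℝ)+1) * (Nat.centralBinom (j+1) : ℝ)
      = 2 * (2*(j:ℝ)+1) * (Nat.centralBinom j : ℝ) := by exact_mod_cast this
  simpa [cb] using h

private lemma two_mul_T (m : ℕ) :
    2 * (∑ k ∈ range (m+1), (k:ℝ) * cb k * cb (m-k))
      = m * ∑ k ∈ range (m+1), cb k * cb (m-k) := by
  have hrefl := Finset.sum_range_reflect (fun k => (k:ℝ) * cb k * cb (m-k)) (m+1)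
  -- hrefl : ∑ j ∈ range (m+1), f (m+1-1-j) = ∑ j, f j
  have h2 : ∑ j ∈ range (m+1), ((m - j : ℕ) : ℝ) * cb (m - j) * cb j
      = ∑ k ∈ range (m+1), (k:ℝ) * cb k * cb (m-k) := by
    rw [← hrefl]
    refine Finset.sum_congr rfl fun j hj => ?_
    simp only [mem_range] at hj
    have : m + 1 - 1 - j = m - j := by omega
    rw [this, Nat.sub_sub_self (by omega : j ≤ m)]
  calc 2 * (∑ k ∈ range (m+1), (k:ℝ) * cb k * cb (m-k))
      = (∑ k ∈ range (m+1), (k:ℝ) * cb k * cb (m-k))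
        + ∑ j ∈ range (m+1), ((m - j : ℕ) : ℝ) * cb (m - j) * cb j := by rw [h2]; ring
    _ = ∑ k ∈ range (m+1), ((k:ℝ) * cb k * cb (m-k) + ((m - k : ℕ) : ℝ) * cb (m - k) * cb k) := by
        rw [← Finset.sum_add_distrib]
    _ = m * ∑ k ∈ range (m+1), cb k * cb (m-k) := by
        rw [Finset.mul_sum]
        refine Finset.sum_congr rfl fun k hk => ?_
        simp only [mem_range] at hk
        have hc : ((m - k : ℕ) : ℝ) = (m : ℝ) - k := by
          have : k ≤ m := by omega
          exact Nat.cast_sub this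
        rw [hc]; ring

private lemma cb_conv (n : ℕ) :
    ∑ k ∈ range (n+1), cb k * cb (n-k) = 4 ^ n := by
  induction n with
  | zero => simp [cb, Nat.centralBinom]
  | succ n ih =>
    have key : ((n:ℝ) + 1) * ∑ k ∈ range (n+2), cb k * cb (n+1-k)
        = ((n:ℝ) + 1) * (4 * ∑ k ∈ range (n+1), cb k * cb (n-k)) := by
      have e1 : ((n:ℝ) + 1) * ∑ k ∈ range (n+2), cb k * cb (n+1-k)
          = 2 * ∑ k ∈ range (n+2), (k:ℝ) * cb k * cb (n+1-k) := by
        rw [two_mul_T (n+1)]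
        push_cast; ring
      have e2 : ∑ k ∈ range (n+2), (k:ℝ) * cb k * cb (n+1-k)
          = ∑ j ∈ range (n+1), ((j:ℝ)+1) * cb (j+1) * cb (n-j) := by
        rw [Finset.sum_range_succ']
        simp only [Nat.cast_zero, zero_mul, mul_zero, zero_mul, add_zero]
        refine Finset.sum_congr rfl fun j hj => ?_
        have : n + 1 - (j + 1) = n - j := by omega
        rw [this]; push_cast; ring
      have e3 : ∑ j ∈ range (n+1), ((j:ℝ)+1) * cb (j+1) * cb (n-j)
          = 4 * (∑ j ∈ range (n+1), (j:ℝ) * cb j * cb (n-j))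
            + 2 * ∑ j ∈ range (n+1), cb j * cb (n-j) := by
        rw [Finset.mul_sum, Finset.mul_sum, ← Finset.sum_add_distrib]
        refine Finset.sum_congr rfl fun j hj => ?_
        rw [← mul_assoc, cb_rec j]; ring
      have e4 := two_mul_T n
      rw [e1, e2, e3]
      nlinarith [e4]
    have hne : ((n:ℝ) + 1) ≠ 0 := by positivity
    have := mul_left_cancel₀ hne key
    rw [this, ih]; ring


private lemma cb_term_le {x : ℝ} (k : ℕ) : ‖cb k * x ^ k‖ ≤ (4 * |x|) ^ k := by
  rw [norm_mul, norm_pow, Real.norm_eq_abs, Real.norm_eq_abs, mul_pow,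
    abs_of_pos (cb_pos k)]
  exact mul_le_mul_of_nonneg_right (cb_le k) (by positivity)

private lemma summable_cb_norm {x : ℝ} (hx : |x| < 1/4) :
    Summable fun k => ‖cb k * x ^ k‖ := by
  apply Summable.of_nonneg_of_le (fun k => norm_nonneg _) (fun k => cb_term_le k)
  exact summable_geometric_of_lt_one (by positivity) (by nlinarith [abs_nonneg x])

private lemma hasSum_cb {x : ℝ} (hx : |x| < 1/8) :
    HasSum (fun k => cb k * x ^ k) (1 / Real.sqrt (1 - 4 * x)) := by
  have hx4 : |x| < 1/4 := by linarith
  have hsn := summable_cb_norm hx4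
  have hs : Summable fun k => cb k * x ^ k := hsn.of_norm
  set G := ∑' k, cb k * x ^ k with hGdef
  have hG : HasSum (fun k => cb k * x ^ k) G := hs.hasSum
  have habs : 4 * |x| < 1/2 := by linarith
  have h4x : |4 * x| < 1 := by rw [abs_mul, abs_of_nonneg (by norm_num : (0:ℝ) ≤ 4)]; linarith
  have h1 : 0 < 1 - 4 * x := by
    have : 4 * x ≤ |4 * x| := le_abs_self _
    linarith [abs_lt.1 h4x]
  -- Cauchy product gives G * G = (1 - 4x)⁻¹
  have hsq := hasSum_sum_range_mul_of_summable_norm (R := ℝ) hsn hsn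
  have hterm : ∀ n, ∑ k ∈ range (n+1), (cb k * x ^ k) * (cb (n-k) * x ^ (n-k)) = (4 * x) ^ n := by
    intro n
    have e : ∑ k ∈ range (n+1), (cb k * x ^ k) * (cb (n-k) * x ^ (n-k))
        = (∑ k ∈ range (n+1), cb k * cb (n-k)) * x ^ n := by
      rw [Finset.sum_mul]
      refine Finset.sum_congr rfl fun k hk => ?_
      simp only [mem_range] at hk
      have hp : x ^ k * x ^ (n - k) = x ^ n := by
        rw [← pow_add, show k + (n - k) = n by omega]
      linear_combination (cb k * cb (n - k)) * hp
    rw [e, cb_conv, mul_pow]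
  have hsq' : HasSum (fun n => (4 * x) ^ n) ((∑' k, cb k * x ^ k) * (∑' k, cb k * x ^ k)) := by
    simpa only [hterm] using hsq
  have hGG : G * G = (1 - 4 * x)⁻¹ := by
    rw [hGdef]
    exact hsq'.unique (hasSum_geometric_of_abs_lt_one h4x)
  -- positivity of G
  have htail : |∑' k, cb (k+1) * x ^ (k+1)| < 1 := by
    have hsn1 : Summable fun k => ‖cb (k+1) * x ^ (k+1)‖ :=
      (summable_nat_add_iff 1).2 hsn
    have hgs : Summable fun k : ℕ => (4 * |x|) ^ (k+1) :=
      ((summable_geometric_of_lt_one (r := 4 * |x|) (by positivity) (by linarith)).mul_left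
        (4 * |x|)).congr (fun k => (pow_succ' _ _).symm)
    calc |∑' k, cb (k+1) * x ^ (k+1)| ≤ ∑' k, ‖cb (k+1) * x ^ (k+1)‖ := by
          simpa using norm_tsum_le_tsum_norm hsn1
      _ ≤ ∑' k : ℕ, (4 * |x|) ^ (k+1) :=
          Summable.tsum_le_tsum (fun k => cb_term_le (k+1)) hsn1 hgs
      _ = (4 * |x|) * (1 - 4 * |x|)⁻¹ := by
          rw [tsum_congr (fun k : ℕ => (pow_succ' (4 * |x|) k : _ = _)),
            tsum_mul_left, tsum_geometric_of_lt_one (by positivity : 0 ≤ 4 * |x|) (by linarith)]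
      _ < 1 := by
          rw [mul_inv_lt_iff₀ (by linarith)]
          nlinarith [abs_nonneg x]
  have hG1 : G = 1 + ∑' k, cb (k+1) * x ^ (k+1) := by
    rw [hGdef, Summable.tsum_eq_zero_add hs]
    simp [cb, Nat.centralBinom]
  have hGpos : 0 < G := by
    rw [hG1]
    have := abs_lt.1 htail
    linarith
  -- conclude
  have hsc : Real.sqrt (1 - 4 * x) * G = 1 := by
    have hsq2 : (Real.sqrt (1 - 4 * x) * G) * (Real.sqrt (1 - 4 * x) * G) = 1 := by
      rw [show (Real.sqrt (1 - 4 * x) * G) * (Real.sqrt (1 - 4 * x) * G)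
        = (Real.sqrt (1 - 4 * x) * Real.sqrt (1 - 4 * x)) * (G * G) by ring,
        Real.mul_self_sqrt h1.le, hGG, mul_inv_cancel₀ (ne_of_gt h1)]
    rcases mul_self_eq_one_iff.1 hsq2 with h | h
    · exact h
    · exfalso
      have : 0 < Real.sqrt (1 - 4 * x) * G := mul_pos (Real.sqrt_pos.2 h1) hGpos
      linarith
  have : G = 1 / Real.sqrt (1 - 4 * x) := by
    field_simp at hsc ⊢
    linarith [hsc]
  exact this ▸ hG


/-- The generating-function expression
    `F(t) = (1/2)/√((1-t)(1-2t)(2t²+t+1)) - (1/2)/(1-t)`. -/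
noncomputable def F (t : ℝ) : ℝ :=
  1 / 2 * (1 / Real.sqrt ((1 - t) * (1 - 2 * t) * (2 * t ^ 2 + t + 1))) -
    1 / 2 * (1 / (1 - t))

private def bcoef (n : ℕ) : ℕ :=
  ∑ j ∈ range n, Nat.centralBinom (j+1) * ((n - 2*(j+1)).choose (j+1))

private noncomputable def acoef (n : ℕ) : ℝ := (bcoef n : ℝ) / 2

private lemma row_hasSum (j : ℕ) {t : ℝ} (ht : |t| < 1) :
    HasSum (fun n => (((n - 2*(j+1)).choose (j+1) : ℕ) : ℝ) * t ^ n)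
      (t ^ (3*(j+1)) * (1 / (1-t) ^ (j+2))) := by
  have hbase := hasSum_choose_mul_geometric_of_norm_lt_one (𝕜 := ℝ) (j+1)
    (by simpa using ht)
  have h2 := hbase.mul_left (t ^ (3*(j+1)))
  have h3 : HasSum
      (fun m => (((m + 3*(j+1)) - 2*(j+1)).choose (j+1) : ℝ) * t ^ (m + 3*(j+1)))
      (t ^ (3*(j+1)) * (1 / (1-t) ^ (j+1+1))) := by
    refine h2.congr_fun fun m => ?_
    rw [show m + 3*(j+1) - 2*(j+1) = m + (j+1) by omega, pow_add]
    ring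
  have h4 := (hasSum_nat_add_iff
    (f := fun n => (((n - 2*(j+1)).choose (j+1) : ℕ) : ℝ) * t ^ n) (3*(j+1))).1 h3
  have hz : ∑ i ∈ range (3*(j+1)), (((i - 2*(j+1)).choose (j+1) : ℕ) : ℝ) * t ^ i = 0 := by
    refine Finset.sum_eq_zero fun i hi => ?_
    simp only [mem_range] at hi
    have : i - 2*(j+1) < j+1 := by omega
    simp [Nat.choose_eq_zero_of_lt this]
  rw [hz, add_zero] at h4
  exact h4

private lemma col_hasSum {t : ℝ} (n : ℕ) :
    HasSum (fun j : ℕ => cb (j+1) * ((((n - 2*(j+1)).choose (j+1) : ℕ) : ℝ) * t ^ n) / 2)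
      (acoef n * t ^ n) := by
  have h := hasSum_sum_of_ne_finset_zero
    (f := fun j : ℕ => cb (j+1) * ((((n - 2*(j+1)).choose (j+1) : ℕ) : ℝ) * t ^ n) / 2)
    (s := range n) (L := SummationFilter.unconditional ℕ) (fun j hj => by
      simp only [mem_range, not_lt] at hj
      have : n - 2*(j+1) < j+1 := by omega
      simp [Nat.choose_eq_zero_of_lt this])
  convert h using 1
  rw [acoef, bcoef]
  push_cast
  rw [Finset.sum_div, Finset.sum_mul]
  refine (Finset.sum_congr rfl fun j hj => ?_).symm
  rw [cb]
  ring

private lemma rowsum_hasSum {t : ℝ} (ht : |t| < 1/10) :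
    HasSum (fun j => cb (j+1) * (t ^ (3*(j+1)) * (1 / (1-t) ^ (j+2))) / 2)
      ((1 / Real.sqrt (1 - 4 * (t ^ 3 / (1 - t))) - 1) * ((1-t)⁻¹ / 2)) := by
  have htabs := abs_lt.1 ht
  have h1t : 0 < 1 - t := by linarith
  have h1tn : (1 - t) ≠ 0 := ne_of_gt h1t
  have hx : |t ^ 3 / (1 - t)| < 1/8 := by
    rw [abs_div, abs_pow, abs_of_pos h1t, div_lt_iff₀ h1t]
    have h3 : |t| ^ 3 < (1/10) ^ 3 := by
      apply pow_lt_pow_left₀ ht (abs_nonneg t)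
      norm_num
    nlinarith [abs_nonneg t]
  have htail : HasSum (fun j => cb (j+1) * (t ^ 3 / (1 - t)) ^ (j+1))
      (1 / Real.sqrt (1 - 4 * (t ^ 3 / (1 - t))) - 1) := by
    have h := (hasSum_nat_add_iff' (f := fun k => cb k * (t ^ 3 / (1 - t)) ^ k) 1).2
      (hasSum_cb hx)
    simpa [cb, Nat.centralBinom] using h
  have hterm : ∀ j : ℕ, cb (j+1) * (t ^ 3 / (1 - t)) ^ (j+1) * ((1-t)⁻¹ / 2)
      = cb (j+1) * (t ^ (3*(j+1)) * (1 / (1-t) ^ (j+2))) / 2 := by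
    intro j
    have hp2 : (1 - t) ^ (j+2) = (1 - t) ^ (j+1) * (1 - t) := by ring
    rw [div_pow, show (t ^ 3) ^ (j+1) = t ^ (3*(j+1)) by rw [← pow_mul], hp2, one_div,
      mul_inv]
    ring
  exact (htail.mul_right ((1-t)⁻¹ / 2)).congr_fun (fun j => (hterm j).symm)

private lemma key {t : ℝ} (ht : |t| < 1/10) :
    HasSum (fun n => acoef n * t ^ n) (F t) := by
  have htabs := abs_lt.1 ht
  have ht1 : |t| < 1 := by linarith
  have h1t : 0 < 1 - t := by linarith
  have hx4 : 0 < 1 - 4 * (t ^ 3 / (1 - t)) := by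
    have hx : |t ^ 3 / (1 - t)| < 1/8 := by
      rw [abs_div, abs_pow, abs_of_pos h1t, div_lt_iff₀ h1t]
      have h3 : |t| ^ 3 < (1/10) ^ 3 := by
        apply pow_lt_pow_left₀ ht (abs_nonneg t)
        norm_num
      nlinarith [abs_nonneg t]
    have := abs_lt.1 hx
    linarith
  set f : ℕ × ℕ → ℝ :=
    fun p => cb (p.1+1) * ((((p.2 - 2*(p.1+1)).choose (p.1+1) : ℕ) : ℝ) * t ^ p.2) / 2
    with hfdef
  have hrow : ∀ j : ℕ, HasSum (fun n => f (j, n))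
      (cb (j+1) * (t ^ (3*(j+1)) * (1 / (1-t) ^ (j+2))) / 2) :=
    fun j => ((row_hasSum j ht1).mul_left (cb (j+1))).div_const 2
  have hFval : F t = (1 / Real.sqrt (1 - 4 * (t ^ 3 / (1 - t))) - 1) * ((1-t)⁻¹ / 2) := by
    have hpoly : (1 - t) * (1 - 2*t) * (2*t^2 + t + 1)
        = (1 - t)^2 * (1 - 4 * (t ^ 3 / (1 - t))) := by
      field_simp
      ring
    have hsq : Real.sqrt ((1 - t) * (1 - 2*t) * (2*t^2 + t + 1))
        = (1 - t) * Real.sqrt (1 - 4 * (t ^ 3 / (1 - t))) := by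
      rw [hpoly, Real.sqrt_mul (sq_nonneg _), Real.sqrt_sq h1t.le]
    rw [F, hsq]
    simp only [one_div, mul_inv]
    ring
  have hrowsumF : HasSum (fun j => cb (j+1) * (t ^ (3*(j+1)) * (1 / (1-t) ^ (j+2))) / 2)
      (F t) := by
    rw [hFval]; exact rowsum_hasSum ht
  -- summability over the product via absolute values
  have habs_lt : |(|t|)| < 1/10 := by rwa [abs_abs]
  have habs1 : |(|t|)| < 1 := by rw [abs_abs]; linarith
  have hrow' : ∀ j : ℕ, HasSum
      (fun n => cb (j+1) * ((((n - 2*(j+1)).choose (j+1) : ℕ) : ℝ) * |t| ^ n) / 2)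
      (cb (j+1) * (|t| ^ (3*(j+1)) * (1 / (1-|t|) ^ (j+2))) / 2) :=
    fun j => ((row_hasSum j habs1).mul_left (cb (j+1))).div_const 2
  have hfabs : ∀ p : ℕ × ℕ, |f p| =
      cb (p.1+1) * ((((p.2 - 2*(p.1+1)).choose (p.1+1) : ℕ) : ℝ) * |t| ^ p.2) / 2 := by
    intro p
    rw [hfdef]
    simp only
    rw [abs_div, abs_mul, abs_mul, abs_pow, abs_of_pos (cb_pos _), Nat.abs_cast]
    norm_num
  have hsummable_abs : Summable (fun p : ℕ × ℕ => |f p|) := by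
    rw [show (fun p : ℕ × ℕ => |f p|)
      = (fun p : ℕ × ℕ =>
          cb (p.1+1) * ((((p.2 - 2*(p.1+1)).choose (p.1+1) : ℕ) : ℝ) * |t| ^ p.2) / 2)
      from funext hfabs]
    refine (summable_prod_of_nonneg ?_).2 ⟨fun j => (hrow' j).summable, ?_⟩
    · intro p
      exact div_nonneg (mul_nonneg (cb_pos _).le
        (mul_nonneg (Nat.cast_nonneg _) (pow_nonneg (abs_nonneg t) _))) (by norm_num)
    · refine (rowsum_hasSum habs_lt).summable.congr fun j => ?_
      exact ((hrow' j).tsum_eq).symm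
  have hsummable : Summable f := summable_abs_iff.1 hsummable_abs
  have htsum : ∑' p, f p = F t := by
    rw [Summable.tsum_prod' hsummable (fun j => (hrow j).summable)]
    calc ∑' j, ∑' n, f (j, n)
        = ∑' j, (cb (j+1) * (t ^ (3*(j+1)) * (1 / (1-t) ^ (j+2))) / 2) :=
          tsum_congr fun j => (hrow j).tsum_eq
      _ = F t := hrowsumF.tsum_eq
  have hfsum : HasSum f (F t) := htsum ▸ hsummable.hasSum
  have hswap : HasSum (f ∘ (Equiv.prodComm ℕ ℕ)) (F t) :=
    ((Equiv.prodComm ℕ ℕ).hasSum_iff).2 hfsum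
  exact hswap.prod_fiberwise (fun n => col_hasSum n)

private lemma acoef_nonneg (n : ℕ) : 0 ≤ acoef n := by
  rw [acoef]
  positivity

private lemma acoef_pos {n : ℕ} (hn : 3 ≤ n) : 0 < acoef n := by
  have hb : 0 < bcoef n := by
    rw [bcoef]
    apply Finset.sum_pos'
    · intro j _
      exact Nat.zero_le _
    · refine ⟨0, Finset.mem_range.2 (by omega), ?_⟩
      have h1 : Nat.centralBinom 1 = 2 := by decide
      have h2 : (n - 2*(0+1)).choose (0+1) = n - 2 := Nat.choose_one_right _
      rw [h1, h2]
      omega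
  rw [acoef]
  have : (0:ℝ) < (bcoef n : ℝ) := by exact_mod_cast hb
  linarith

/-- The generating function is 3-samo: every iterated derivative of `F` at `0`
    of order `n ≥ 3` is strictly positive. -/
theorem F_iteratedDeriv_pos (n : ℕ) (hn : 3 ≤ n) : 0 < iteratedDeriv n F 0 := by
  set p : FormalMultilinearSeries ℝ ℝ ℝ := FormalMultilinearSeries.ofScalars ℝ acoef with hp
  have hsum16 : Summable (fun m => acoef m * (1/16 : ℝ) ^ m) :=
    (key (t := 1/16) (by rw [abs_of_pos (by norm_num : (0:ℝ) < 1/16)]; norm_num)).summable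
  have hr : ((16⁻¹ : ℝ≥0) : ℝ≥0∞) ≤ p.radius := by
    apply p.le_radius_of_summable_norm
    refine hsum16.congr fun m => ?_
    rw [hp, FormalMultilinearSeries.ofScalars_norm, Real.norm_eq_abs,
      abs_of_nonneg (acoef_nonneg m)]
    norm_num
  have hball : HasFPowerSeriesOnBall F p 0 ((16⁻¹ : ℝ≥0) : ℝ≥0∞) := by
    refine ⟨hr, by simp, ?_⟩
    intro y hy
    have hy' : |y| < 1/16 := by
      rw [mem_emetric_ball_zero_iff, enorm_eq_nnnorm, ENNReal.coe_lt_coe] at hy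
      have : (‖y‖₊ : ℝ) < ((16⁻¹ : ℝ≥0) : ℝ) := by exact_mod_cast hy
      simpa [Real.norm_eq_abs] using (by norm_num at this ⊢; exact this : |y| < 1/16)
    have hk := key (t := y) (by linarith)
    simp only [zero_add]
    refine hk.congr_fun fun m => ?_
    rw [hp, FormalMultilinearSeries.ofScalars_apply_eq, smul_eq_mul]
  have hfact := hball.factorial_smul (1 : ℝ) n
  rw [iteratedDeriv_eq_iteratedFDeriv, ← hfact]
  have hpn : p n (fun _ => (1:ℝ)) = acoef n := by
    rw [hp, FormalMultilinearSeries.ofScalars_apply_eq]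
    simp
  rw [hpn, nsmul_eq_mul]
  have h1 : (0:ℝ) < (n.factorial : ℝ) := by exact_mod_cast Nat.factorial_pos n
  exact mul_pos h1 (acoef_pos hn)
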